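/- Let f : I → ℝ be a continuous operator convex function on an interval I ⊆ ℝ. Then for any bounded selfadjoint operators A and B on a complex Hilbert space H with spectra contained in I, the following chain of inequalities holds in the operator order: f((A + B)/2) ≤ (1/2)[f((3A + B)/4) + f((A + 3B)/4)] ≤ ∫₀¹ f((1−t)A + tB) dt ≤ (1/2)[f((A + B)/2) + (f(A) + f(B))/2] ≤ (f(A) + f(B))/2. -/

import Mathlib

set_option maxHeartbeats 1000000

open MeasureTheory intervalIntegral Polynomial

section HHAux

variable {H : Type*} [NormedAddCommGroup H] [InnerProductSpace ℂ H] [CompleteSpace H]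

set_option synthInstance.maxHeartbeats 1000000 in
noncomputable instance : StarModule ℝ (H →L[ℂ] H) := inferInstance

set_option synthInstance.maxHeartbeats 1000000 in
noncomputable instance : DistribSMul ℝ (H →L[ℂ] H) := inferInstance

lemma sa_smul (c : ℝ) {T : H →L[ℂ] H} (hT : IsSelfAdjoint T) : IsSelfAdjoint (c • T) := by
  rw [IsSelfAdjoint, star_smul, star_trivial, hT.star_eq]

lemma opSmul_le_opSmul {c : ℝ} (hc : 0 ≤ c) {X Y : H →L[ℂ] H} (h : X ≤ Y) : c • X ≤ c • Y := by
  have h' := (ContinuousLinearMap.le_def X Y).mp h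
  refine (ContinuousLinearMap.le_def _ _).mpr ?_
  have hsub : c • Y - c • X = c • (Y - X) := (smul_sub c Y X).symm
  rw [hsub]
  refine ⟨ContinuousLinearMap.isSelfAdjoint_iff_isSymmetric.mp (sa_smul c (ContinuousLinearMap.isSelfAdjoint_iff_isSymmetric.mpr h'.1)), fun x => ?_⟩
  rw [ContinuousLinearMap.reApplyInnerSelf, ContinuousLinearMap.smul_apply,
    RCLike.real_smul_eq_coe_smul (K := ℂ), inner_smul_left]
  simp only [RCLike.conj_ofReal, RCLike.re_ofReal_mul]
  exact mul_nonneg hc (h'.2 x)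

lemma isSelfAdjoint_intervalIntegral {F : ℝ → H →L[ℂ] H} {a b : ℝ}
    (hF : IntervalIntegrable F volume a b) (h : ∀ t, IsSelfAdjoint (F t)) :
    IsSelfAdjoint (∫ t in a..b, F t) := by
  have h2 := ((starL' ℝ : (H →L[ℂ] H) ≃L[ℝ] (H →L[ℂ] H)).toContinuousLinearMap).intervalIntegral_comp_comm hF
  simp only [ContinuousLinearEquiv.coe_coe, starL'_apply] at h2
  rw [IsSelfAdjoint, ← h2]
  exact intervalIntegral.integral_congr fun t _ => h t

lemma intervalIntegral_mono_op {F G : ℝ → H →L[ℂ] H} {a b : ℝ} (hab : a ≤ b)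
    (hF : IntervalIntegrable F volume a b) (hG : IntervalIntegrable G volume a b)
    (hFsa : ∀ t, IsSelfAdjoint (F t)) (hGsa : ∀ t, IsSelfAdjoint (G t))
    (h : ∀ t ∈ Set.Icc a b, F t ≤ G t) :
    (∫ t in a..b, F t) ≤ ∫ t in a..b, G t := by
  have hD : IntervalIntegrable (fun t => G t - F t) volume a b := hG.sub hF
  refine (ContinuousLinearMap.le_def _ _).mpr ?_
  have hsub : (∫ t in a..b, G t) - (∫ t in a..b, F t) = ∫ t in a..b, G t - F t :=
    (intervalIntegral.integral_sub hG hF).symm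
  rw [hsub]
  refine ⟨ContinuousLinearMap.isSelfAdjoint_iff_isSymmetric.mp (isSelfAdjoint_intervalIntegral hD (fun t => (hGsa t).sub (hFsa t))), fun x => ?_⟩
  rw [ContinuousLinearMap.reApplyInnerSelf,
    ContinuousLinearMap.intervalIntegral_apply hD x]
  set φ : H →L[ℝ] ℝ := (RCLike.reCLM (K := ℂ)).comp ((innerSL ℂ x).restrictScalars ℝ) with hφ
  have hint : IntervalIntegrable (fun t => (G t - F t) x) volume a b :=
    ⟨((ContinuousLinearMap.apply ℂ H x).restrictScalars ℝ).integrable_comp hD.1,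
      ((ContinuousLinearMap.apply ℂ H x).restrictScalars ℝ).integrable_comp hD.2⟩
  have hcomm := φ.intervalIntegral_comp_comm hint
  have hre : RCLike.re (inner ℂ ((∫ t in a..b, (G t - F t) x)) x : ℂ)
      = φ (∫ t in a..b, (G t - F t) x) := by
    simp [hφ, inner_re_symm]
  rw [hre, ← hcomm]
  refine intervalIntegral.integral_nonneg hab fun u hu => ?_
  have hpos := (ContinuousLinearMap.le_def _ _).mp (h u hu)
  simpa [hφ] using hpos.re_inner_nonneg_right x

lemma continuousOn_cfc_param [Nontrivial H] {g : ℝ → ℝ} (hg : Continuous g)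
    {L : ℝ → H →L[ℂ] H} (hL : Continuous L) {s : Set ℝ} {R : ℝ}
    (hsa : ∀ t, IsSelfAdjoint (L t)) (hnorm : ∀ t ∈ s, ‖L t‖ ≤ R) :
    ContinuousOn (fun t => cfc g (L t)) s := by
  rw [Metric.continuousOn_iff]
  intro t₀ ht₀ ε hε
  obtain ⟨p, hp⟩ := exists_polynomial_near_of_continuousOn (-R) R g hg.continuousOn
    (ε/3) (by linarith)
  have hkey : ∀ t ∈ s, ‖cfc g (L t) - Polynomial.aeval (L t) p‖ ≤ ε/3 := by
    intro t ht
    rw [← cfc_polynomial p (L t) (hsa t),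
      ← cfc_sub g (fun x => p.eval x) (L t)]
    refine norm_cfc_le (by linarith) fun x hx => ?_
    have hx' : x ∈ Set.Icc (-R) R := by
      have h1 := spectrum.subset_closedBall_norm (𝕜 := ℝ) (L t) hx
      rw [Metric.mem_closedBall, Real.dist_eq, sub_zero] at h1
      exact Set.mem_Icc.mpr (abs_le.mp (h1.trans (hnorm t ht)))
    have h2 := hp x hx'
    rw [Real.norm_eq_abs, abs_sub_comm]
    exact le_of_lt h2
  have hcont : Continuous fun t => Polynomial.aeval (L t) p :=
    p.continuous_aeval.comp hL
  obtain ⟨δ, hδ, hδ'⟩ := Metric.continuous_iff.mp hcont t₀ (ε/3) (by linarith)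
  refine ⟨δ, hδ, fun t ht hdist => ?_⟩
  have h4 := dist_triangle4 (cfc g (L t)) (Polynomial.aeval (L t) p)
    (Polynomial.aeval (L t₀) p) (cfc g (L t₀))
  have e1 : dist (cfc g (L t)) (Polynomial.aeval (L t) p) ≤ ε/3 := by
    rw [dist_eq_norm]; exact hkey t ht
  have e2 := hδ' t hdist
  have e3 : dist (Polynomial.aeval (L t₀) p) (cfc g (L t₀)) ≤ ε/3 := by
    rw [dist_comm, dist_eq_norm]; exact hkey t₀ ht₀
  linarith

lemma spectrum_combo {m M : ℝ} {X Y : H →L[ℂ] H} (hX : IsSelfAdjoint X) (hY : IsSelfAdjoint Y)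
    (hXs : spectrum ℝ X ⊆ Set.Icc m M) (hYs : spectrum ℝ Y ⊆ Set.Icc m M)
    {t : ℝ} (ht : t ∈ Set.Icc (0:ℝ) 1) :
    spectrum ℝ ((1 - t) • X + t • Y) ⊆ Set.Icc m M := by
  have hsa : IsSelfAdjoint ((1 - t) • X + t • Y) := (sa_smul _ hX).add (sa_smul _ hY)
  have hXl : algebraMap ℝ (H →L[ℂ] H) m ≤ X :=
    (algebraMap_le_iff_le_spectrum hX).mpr fun x hx => (hXs hx).1
  have hXu : X ≤ algebraMap ℝ (H →L[ℂ] H) M :=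
    (le_algebraMap_iff_spectrum_le hX).mpr fun x hx => (hXs hx).2
  have hYl : algebraMap ℝ (H →L[ℂ] H) m ≤ Y :=
    (algebraMap_le_iff_le_spectrum hY).mpr fun x hx => (hYs hx).1
  have hYu : Y ≤ algebraMap ℝ (H →L[ℂ] H) M :=
    (le_algebraMap_iff_spectrum_le hY).mpr fun x hx => (hYs hx).2
  have hm : algebraMap ℝ (H →L[ℂ] H) m ≤ (1 - t) • X + t • Y := by
    have e : algebraMap ℝ (H →L[ℂ] H) m
        = (1 - t) • algebraMap ℝ (H →L[ℂ] H) m + t • algebraMap ℝ (H →L[ℂ] H) m := by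
      module
    rw [e]
    exact add_le_add (opSmul_le_opSmul (by linarith [ht.2]) hXl) (opSmul_le_opSmul ht.1 hYl)
  have hM : (1 - t) • X + t • Y ≤ algebraMap ℝ (H →L[ℂ] H) M := by
    have e : algebraMap ℝ (H →L[ℂ] H) M
        = (1 - t) • algebraMap ℝ (H →L[ℂ] H) M + t • algebraMap ℝ (H →L[ℂ] H) M := by
      module
    rw [e]
    exact add_le_add (opSmul_le_opSmul (by linarith [ht.2]) hXu) (opSmul_le_opSmul ht.1 hYu)
  intro x hx
  exact ⟨(algebraMap_le_iff_le_spectrum hsa).mp hm x hx,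
    (le_algebraMap_iff_spectrum_le hsa).mp hM x hx⟩

lemma hh_aux [Nontrivial H] (I : Set ℝ)
    (f : ℝ → ℝ) (hf : ContinuousOn f I)
    (hconvex : ∀ A B : H →L[ℂ] H, IsSelfAdjoint A → IsSelfAdjoint B →
      spectrum ℝ A ⊆ I → spectrum ℝ B ⊆ I → ∀ lam ∈ Set.Icc (0:ℝ) 1,
        cfc f ((1 - lam) • A + lam • B) ≤ (1 - lam) • cfc f A + lam • cfc f B)
    {m M : ℝ} (hmM : m ≤ M) (hmI : Set.Icc m M ⊆ I)
    (X Y : H →L[ℂ] H) (hX : IsSelfAdjoint X) (hY : IsSelfAdjoint Y)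
    (hXs : spectrum ℝ X ⊆ Set.Icc m M) (hYs : spectrum ℝ Y ⊆ Set.Icc m M) :
    ContinuousOn (fun t : ℝ => cfc f ((1 - t) • X + t • Y)) (Set.Icc (0:ℝ) 1) ∧
    cfc f ((2:ℝ)⁻¹ • (X + Y)) ≤ (∫ t in (0:ℝ)..1, cfc f ((1 - t) • X + t • Y)) ∧
    (∫ t in (0:ℝ)..1, cfc f ((1 - t) • X + t • Y)) ≤ (2:ℝ)⁻¹ • (cfc f X + cfc f Y) := by
  have hXI : spectrum ℝ X ⊆ I := hXs.trans hmI
  have hYI : spectrum ℝ Y ⊆ I := hYs.trans hmI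
  have hLsa : ∀ t : ℝ, IsSelfAdjoint ((1 - t) • X + t • Y) :=
    fun t => (sa_smul _ hX).add (sa_smul _ hY)
  have hspec : ∀ t ∈ Set.Icc (0:ℝ) 1, spectrum ℝ ((1 - t) • X + t • Y) ⊆ Set.Icc m M :=
    fun t ht => spectrum_combo hX hY hXs hYs ht
  have hLI : ∀ t ∈ Set.Icc (0:ℝ) 1, spectrum ℝ ((1 - t) • X + t • Y) ⊆ I :=
    fun t ht => (hspec t ht).trans hmI
  -- continuity of t ↦ cfc f (L t) on [0,1]
  have hclampmem : ∀ x : ℝ, max m (min x M) ∈ Set.Icc m M := fun x =>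
    ⟨le_max_left _ _, max_le hmM (min_le_right _ _)⟩
  have hg : Continuous fun x => f (max m (min x M)) := by
    refine hf.comp_continuous ?_ fun x => hmI (hclampmem x)
    exact continuous_const.max ((continuous_id.min continuous_const))
  
  have hhalf : ∀ v : H →L[ℂ] H, (2:ℝ)⁻¹ • (v + v) = v := fun v => by module
  have hhalf2 : ∀ u v : H →L[ℂ] H, (1 - 2⁻¹ : ℝ) • u + (2⁻¹ : ℝ) • v = (2:ℝ)⁻¹ • (u + v) := fun u v => by module
  have hgf : Set.EqOn (fun t => cfc (fun x => f (max m (min x M))) ((1 - t) • X + t • Y))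
      (fun t : ℝ => cfc f ((1 - t) • X + t • Y)) (Set.Icc 0 1) := by
    intro t ht
    refine cfc_congr fun x hx => ?_
    have hx' := hspec t ht hx
    show f (max m (min x M)) = f x
    rw [min_eq_left hx'.2, max_eq_right hx'.1]
  have hLcont : Continuous fun t : ℝ => (1 - t) • X + t • Y := by
    exact ((continuous_const.sub continuous_id).smul continuous_const).add
      (continuous_id.smul continuous_const)
  have hnorm : ∀ t ∈ Set.Icc (0:ℝ) 1, ‖(1 - t) • X + t • Y‖ ≤ ‖X‖ + ‖Y‖ := by
    intro t ht
    calc ‖(1 - t) • X + t • Y‖ ≤ ‖(1 - t) • X‖ + ‖t • Y‖ := norm_add_le _ _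
      _ = |1 - t| * ‖X‖ + |t| * ‖Y‖ := by rw [norm_smul, norm_smul, Real.norm_eq_abs, Real.norm_eq_abs]
      _ ≤ 1 * ‖X‖ + 1 * ‖Y‖ := by
          have h1 : |1 - t| ≤ 1 := by rw [abs_le]; constructor <;> linarith [ht.1, ht.2]
          have h2 : |t| ≤ 1 := by rw [abs_le]; constructor <;> linarith [ht.1, ht.2]
          gcongr <;> positivity
      _ = ‖X‖ + ‖Y‖ := by ring
  have hFcont : ContinuousOn (fun t : ℝ => cfc f ((1 - t) • X + t • Y)) (Set.Icc 0 1) :=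
    (continuousOn_cfc_param hg hLcont hLsa hnorm).congr hgf.symm
  have hFint : IntervalIntegrable (fun t : ℝ => cfc f ((1 - t) • X + t • Y)) volume 0 1 := by
    apply ContinuousOn.intervalIntegrable
    rwa [Set.uIcc_of_le zero_le_one]
  have hFsa : ∀ t : ℝ, IsSelfAdjoint (cfc f ((1 - t) • X + t • Y)) := fun t => cfc_predicate _ _
  refine ⟨hFcont, ?_, ?_⟩
  · -- lower bound
    have hrevcont : ContinuousOn (fun t : ℝ => cfc f ((1 - (1 - t)) • X + (1 - t) • Y)) (Set.Icc 0 1) := by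
      refine hFcont.comp (continuous_const.sub continuous_id).continuousOn ?_
      intro t ht
      exact ⟨by linarith [ht.2], by linarith [ht.1]⟩
    have hGcont : ContinuousOn (fun t : ℝ => (2:ℝ)⁻¹ • (cfc f ((1 - t) • X + t • Y) + cfc f ((1 - (1 - t)) • X + (1 - t) • Y))) (Set.Icc 0 1) :=
      (hFcont.add hrevcont).const_smul ((2:ℝ)⁻¹)
    have hGint : IntervalIntegrable (fun t : ℝ => (2:ℝ)⁻¹ • (cfc f ((1 - t) • X + t • Y) + cfc f ((1 - (1 - t)) • X + (1 - t) • Y))) volume 0 1 := by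
      apply ContinuousOn.intervalIntegrable
      rwa [Set.uIcc_of_le zero_le_one]
    have hrevint : IntervalIntegrable (fun t : ℝ => cfc f ((1 - (1 - t)) • X + (1 - t) • Y)) volume 0 1 := by
      apply ContinuousOn.intervalIntegrable
      rwa [Set.uIcc_of_le zero_le_one]
    have hpt : ∀ t ∈ Set.Icc (0:ℝ) 1,
        (fun _ : ℝ => cfc f ((2:ℝ)⁻¹ • (X + Y))) t ≤ (fun t : ℝ => (2:ℝ)⁻¹ • (cfc f ((1 - t) • X + t • Y) + cfc f ((1 - (1 - t)) • X + (1 - t) • Y))) t := by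
      intro t ht
      have ht' : (1 : ℝ) - t ∈ Set.Icc (0:ℝ) 1 := ⟨by linarith [ht.2], by linarith [ht.1]⟩
      have h1 := hconvex ((1 - t) • X + t • Y) ((1 - (1 - t)) • X + (1 - t) • Y)
        (hLsa t) (hLsa (1 - t)) (hLI t ht) (hLI (1 - t) ht')
        2⁻¹ ⟨by norm_num, by norm_num⟩
      have e1 : (1 - 2⁻¹ : ℝ) • ((1 - t) • X + t • Y)
          + (2⁻¹ : ℝ) • ((1 - (1 - t)) • X + (1 - t) • Y) = (2:ℝ)⁻¹ • (X + Y) := by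
        module
      rw [e1] at h1
      exact h1.trans (le_of_eq (hhalf2 _ _))
    have hmono := intervalIntegral_mono_op zero_le_one
      (intervalIntegrable_const) hGint
      (fun _ => cfc_predicate _ _)
      (fun t => (sa_smul _ ((hFsa t).add (cfc_predicate _ _)))) hpt
    have hconst : (∫ _ in (0:ℝ)..1, cfc f ((2:ℝ)⁻¹ • (X + Y)))
        = cfc f ((2:ℝ)⁻¹ • (X + Y)) := by simp
    have hrev : (∫ t in (0:ℝ)..1, cfc f ((1 - (1 - t)) • X + (1 - t) • Y)) = ∫ t in (0:ℝ)..1, cfc f ((1 - t) • X + t • Y) := by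
      have h0 := intervalIntegral.integral_comp_sub_left (a := (0:ℝ)) (b := 1)
        (fun t : ℝ => cfc f ((1 - t) • X + t • Y)) 1
      simpa using h0
    have hsplit : (∫ t in (0:ℝ)..1, (2:ℝ)⁻¹ • (cfc f ((1 - t) • X + t • Y) + cfc f ((1 - (1 - t)) • X + (1 - t) • Y)))
        = ∫ t in (0:ℝ)..1, cfc f ((1 - t) • X + t • Y) := by
      rw [intervalIntegral.integral_smul, intervalIntegral.integral_add hFint hrevint, hrev]
      exact hhalf _
    rw [hconst, hsplit] at hmono
    exact hmono
  · -- upper bound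
    have hpt : ∀ t ∈ Set.Icc (0:ℝ) 1,
        cfc f ((1 - t) • X + t • Y) ≤ (fun t : ℝ => (1 - t) • cfc f X + t • cfc f Y) t := fun t ht =>
      hconvex X Y hX hY hXI hYI t ht
    have hGcont : Continuous fun t : ℝ => (1 - t) • cfc f X + t • cfc f Y :=
      ((continuous_const.sub continuous_id).smul continuous_const).add
        (continuous_id.smul continuous_const)
    have hGint : IntervalIntegrable (fun t : ℝ => (1 - t) • cfc f X + t • cfc f Y)
        volume 0 1 := hGcont.intervalIntegrable _ _
    have hmono := intervalIntegral_mono_op zero_le_one hFint hGint hFsa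
      (fun t => (sa_smul _ (cfc_predicate _ _)).add (sa_smul _ (cfc_predicate _ _))) hpt
    have hval : (∫ t in (0:ℝ)..1, ((1 - t) • cfc f X + t • cfc f Y))
        = (2:ℝ)⁻¹ • (cfc f X + cfc f Y) := by
      rw [intervalIntegral.integral_add]
      · rw [intervalIntegral.integral_smul_const, intervalIntegral.integral_smul_const]
        have e1 : (∫ t in (0:ℝ)..1, (1 - t)) = 2⁻¹ := by
          rw [intervalIntegral.integral_sub intervalIntegrable_const intervalIntegrable_id]
          simp
          norm_num
        have e2 : (∫ t in (0:ℝ)..1, t) = 2⁻¹ := by simp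
        rw [e1, e2]
        module
      · exact (((continuous_const.sub continuous_id).smul continuous_const)).intervalIntegrable _ _
      · exact ((continuous_id.smul continuous_const)).intervalIntegrable _ _
    rw [hval] at hmono
    exact hmono

lemma op_half (v : H →L[ℂ] H) : (2:ℝ)⁻¹ • (v + v) = v := by module

lemma op_halftwo (u v : H →L[ℂ] H) : (2:ℝ)⁻¹ • ((2:ℝ) • u + (2:ℝ) • v) = u + v := by module

lemma op_quarter (a b c : H →L[ℂ] H) :
    (2:ℝ)⁻¹ • ((2:ℝ)⁻¹ • (a + b)) + (2:ℝ)⁻¹ • ((2:ℝ)⁻¹ • (b + c))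
      = (2:ℝ)⁻¹ • (b + (2:ℝ)⁻¹ • (a + c)) := by module

end HHAux

/-- Dragomir: Refined Hermite–Hadamard chain for an operator convex
function `f` on an interval `I`:
`f((A+B)/2) ≤ (1/2)[f((3A+B)/4) + f((A+3B)/4)] ≤ ∫₀¹ f((1−t)A + tB) dt
  ≤ (1/2)[f((A+B)/2) + (f(A)+f(B))/2] ≤ (f(A)+f(B))/2` in the operator order. -/
theorem hermite_hadamard_chain_operator_convex
    {H : Type*} [NormedAddCommGroup H] [InnerProductSpace ℂ H] [CompleteSpace H]
    (I : Set ℝ) (hI : I.OrdConnected)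
    (f : ℝ → ℝ) (hf : ContinuousOn f I)
    (hconvex : ∀ A B : H →L[ℂ] H, IsSelfAdjoint A → IsSelfAdjoint B →
      spectrum ℝ A ⊆ I → spectrum ℝ B ⊆ I → ∀ lam ∈ Set.Icc (0:ℝ) 1,
        cfc f ((1 - lam) • A + lam • B) ≤ (1 - lam) • cfc f A + lam • cfc f B) :
    ∀ A B : H →L[ℂ] H, IsSelfAdjoint A → IsSelfAdjoint B →
      spectrum ℝ A ⊆ I → spectrum ℝ B ⊆ I →
      cfc f ((2:ℝ)⁻¹ • (A + B)) ≤
        (2:ℝ)⁻¹ • (cfc f ((4:ℝ)⁻¹ • ((3:ℝ) • A + B)) + cfc f ((4:ℝ)⁻¹ • (A + (3:ℝ) • B))) ∧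
      (2:ℝ)⁻¹ • (cfc f ((4:ℝ)⁻¹ • ((3:ℝ) • A + B)) + cfc f ((4:ℝ)⁻¹ • (A + (3:ℝ) • B))) ≤
        (∫ t in (0:ℝ)..1, cfc f ((1 - t) • A + t • B)) ∧
      (∫ t in (0:ℝ)..1, cfc f ((1 - t) • A + t • B)) ≤
        (2:ℝ)⁻¹ • (cfc f ((2:ℝ)⁻¹ • (A + B)) + (2:ℝ)⁻¹ • (cfc f A + cfc f B)) ∧
      (2:ℝ)⁻¹ • (cfc f ((2:ℝ)⁻¹ • (A + B)) + (2:ℝ)⁻¹ • (cfc f A + cfc f B)) ≤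
        (2:ℝ)⁻¹ • (cfc f A + cfc f B) := by
  intro A B hA hB hAI hBI
  rcases subsingleton_or_nontrivial H with hH | hH
  · have hss : Subsingleton (H →L[ℂ] H) := inferInstance
    exact ⟨le_of_eq (Subsingleton.elim _ _), le_of_eq (Subsingleton.elim _ _),
      le_of_eq (Subsingleton.elim _ _), le_of_eq (Subsingleton.elim _ _)⟩
  -- nontrivial case
  have hnt : Nontrivial (H →L[ℂ] H) := ⟨1, 0, one_ne_zero⟩
  have hAne : (spectrum ℝ A).Nonempty := CFC.spectrum_nonempty (R := ℝ) A hA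
  have hBne : (spectrum ℝ B).Nonempty := CFC.spectrum_nonempty (R := ℝ) B hB
  have hAcp : IsCompact (spectrum ℝ A) := spectrum.isCompact A
  have hBcp : IsCompact (spectrum ℝ B) := spectrum.isCompact B
  set m : ℝ := min (sInf (spectrum ℝ A)) (sInf (spectrum ℝ B)) with hm
  set M : ℝ := max (sSup (spectrum ℝ A)) (sSup (spectrum ℝ B)) with hM
  have hiA : sInf (spectrum ℝ A) ∈ spectrum ℝ A := hAcp.sInf_mem hAne
  have hiB : sInf (spectrum ℝ B) ∈ spectrum ℝ B := hBcp.sInf_mem hBne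
  have hsA : sSup (spectrum ℝ A) ∈ spectrum ℝ A := hAcp.sSup_mem hAne
  have hsB : sSup (spectrum ℝ B) ∈ spectrum ℝ B := hBcp.sSup_mem hBne
  have hmM : m ≤ M :=
    le_trans (min_le_left _ _) (le_trans (csInf_le_csSup hAne hAcp.bddBelow hAcp.bddAbove)
      (le_max_left _ _))
  have hmmem : m ∈ I := by
    rcases min_cases (sInf (spectrum ℝ A)) (sInf (spectrum ℝ B)) with ⟨h, _⟩ | ⟨h, _⟩
    · rw [hm, h]; exact hAI hiA
    · rw [hm, h]; exact hBI hiB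
  have hMmem : M ∈ I := by
    rcases max_cases (sSup (spectrum ℝ A)) (sSup (spectrum ℝ B)) with ⟨h, _⟩ | ⟨h, _⟩
    · rw [hM, h]; exact hAI hsA
    · rw [hM, h]; exact hBI hsB
  have hmI : Set.Icc m M ⊆ I := hI.out hmmem hMmem
  have hAs : spectrum ℝ A ⊆ Set.Icc m M := fun x hx =>
    ⟨le_trans (min_le_left _ _) (csInf_le hAcp.bddBelow hx),
      le_trans (le_csSup hAcp.bddAbove hx) (le_max_left _ _)⟩
  have hBs : spectrum ℝ B ⊆ Set.Icc m M := fun x hx =>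
    ⟨le_trans (min_le_right _ _) (csInf_le hBcp.bddBelow hx),
      le_trans (le_csSup hBcp.bddAbove hx) (le_max_right _ _)⟩
  -- midpoint and quarter points
  have hMidsa : IsSelfAdjoint ((2:ℝ)⁻¹ • (A + B)) := sa_smul _ (hA.add hB)
  have hMideq : (2:ℝ)⁻¹ • (A + B) = (1 - 2⁻¹ : ℝ) • A + (2⁻¹ : ℝ) • B := by module
  have hMids : spectrum ℝ ((2:ℝ)⁻¹ • (A + B)) ⊆ Set.Icc m M := by
    rw [hMideq]
    exact spectrum_combo hA hB hAs hBs ⟨by norm_num, by norm_num⟩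
  have hC1eq : (4:ℝ)⁻¹ • ((3:ℝ) • A + B) = (1 - 4⁻¹ : ℝ) • A + (4⁻¹ : ℝ) • B := by module
  have hC2eq : (4:ℝ)⁻¹ • (A + (3:ℝ) • B) = (1 - (3/4 : ℝ)) • A + ((3/4 : ℝ)) • B := by module
  have hC1sa : IsSelfAdjoint ((4:ℝ)⁻¹ • ((3:ℝ) • A + B)) := by
    rw [hC1eq]; exact (sa_smul _ hA).add (sa_smul _ hB)
  have hC2sa : IsSelfAdjoint ((4:ℝ)⁻¹ • (A + (3:ℝ) • B)) := by
    rw [hC2eq]; exact (sa_smul _ hA).add (sa_smul _ hB)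
  have hC1s : spectrum ℝ ((4:ℝ)⁻¹ • ((3:ℝ) • A + B)) ⊆ Set.Icc m M := by
    rw [hC1eq]; exact spectrum_combo hA hB hAs hBs ⟨by norm_num, by norm_num⟩
  have hC2s : spectrum ℝ ((4:ℝ)⁻¹ • (A + (3:ℝ) • B)) ⊆ Set.Icc m M := by
    rw [hC2eq]; exact spectrum_combo hA hB hAs hBs ⟨by norm_num, by norm_num⟩
  -- the three Hermite–Hadamard instances
  obtain ⟨hcontAB, hlowAB, hupAB⟩ :=
    hh_aux I f hf hconvex hmM hmI A B hA hB hAs hBs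
  obtain ⟨-, hlow1, hup1⟩ :=
    hh_aux I f hf hconvex hmM hmI A ((2:ℝ)⁻¹ • (A + B)) hA hMidsa hAs hMids
  obtain ⟨-, hlow2, hup2⟩ :=
    hh_aux I f hf hconvex hmM hmI ((2:ℝ)⁻¹ • (A + B)) B hMidsa hB hMids hBs
  -- splitting of the integral
  have hint1 : IntervalIntegrable (fun t : ℝ => cfc f ((1 - t) • A + t • B)) volume 0 (1/2) := by
    apply ContinuousOn.intervalIntegrable
    apply hcontAB.mono
    rw [Set.uIcc_of_le (by norm_num : (0:ℝ) ≤ 1/2)]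
    exact Set.Icc_subset_Icc le_rfl (by norm_num)
  have hint2 : IntervalIntegrable (fun t : ℝ => cfc f ((1 - t) • A + t • B)) volume (1/2) 1 := by
    apply ContinuousOn.intervalIntegrable
    apply hcontAB.mono
    rw [Set.uIcc_of_le (by norm_num : (1/2:ℝ) ≤ 1)]
    exact Set.Icc_subset_Icc (by norm_num) le_rfl
  have hsplit : (∫ t in (0:ℝ)..1, cfc f ((1 - t) • A + t • B))
      = (∫ t in (0:ℝ)..(1/2), cfc f ((1 - t) • A + t • B))
        + ∫ t in (1/2:ℝ)..1, cfc f ((1 - t) • A + t • B) :=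
    (intervalIntegral.integral_add_adjacent_intervals hint1 hint2).symm
  have i1 : (∫ s in (0:ℝ)..1, cfc f ((1 - s) • A + s • ((2:ℝ)⁻¹ • (A + B))))
      = (2:ℝ) • ∫ t in (0:ℝ)..(1/2), cfc f ((1 - t) • A + t • B) := by
    have e : (fun s : ℝ => cfc f ((1 - s) • A + s • ((2:ℝ)⁻¹ • (A + B))))
        = fun s : ℝ => cfc f ((1 - s/2) • A + (s/2) • B) := by
      funext s
      congr 1
      module
    rw [e]
    have h0 := intervalIntegral.integral_comp_div (a := (0:ℝ)) (b := 1)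
      (fun t : ℝ => cfc f ((1 - t) • A + t • B)) (two_ne_zero)
    norm_num at h0
    exact h0
  have i2 : (∫ s in (0:ℝ)..1, cfc f ((1 - s) • ((2:ℝ)⁻¹ • (A + B)) + s • B))
      = (2:ℝ) • ∫ t in (1/2:ℝ)..1, cfc f ((1 - t) • A + t • B) := by
    have e : (fun s : ℝ => cfc f ((1 - s) • ((2:ℝ)⁻¹ • (A + B)) + s • B))
        = fun s : ℝ => (fun u : ℝ => cfc f ((1 - u/2) • A + (u/2) • B)) (s + 1) := by
      funext s
      show cfc f _ = cfc f _
      congr 1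
      module
    rw [e, intervalIntegral.integral_comp_add_right
      (fun u : ℝ => cfc f ((1 - u/2) • A + (u/2) • B)) 1]
    have h0 := intervalIntegral.integral_comp_div (a := (1:ℝ)) (b := 2)
      (fun t : ℝ => cfc f ((1 - t) • A + t • B)) (two_ne_zero)
    norm_num at h0
    rw [show (0:ℝ) + 1 = 1 by norm_num, show (1:ℝ) + 1 = 2 by norm_num]
    exact h0
  have htwo : ∀ v : H →L[ℂ] H, (2:ℝ)⁻¹ • ((2:ℝ) • v) = v := fun v => by module
  refine ⟨?_, ?_, ?_, ?_⟩
  · -- first inequality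
    have h1 := hconvex _ _ hC1sa hC2sa (hC1s.trans hmI) (hC2s.trans hmI)
      2⁻¹ ⟨by norm_num, by norm_num⟩
    have e1 : (1 - 2⁻¹ : ℝ) • ((4:ℝ)⁻¹ • ((3:ℝ) • A + B))
        + (2⁻¹ : ℝ) • ((4:ℝ)⁻¹ • (A + (3:ℝ) • B)) = (2:ℝ)⁻¹ • (A + B) := by module
    have e2 : (1 - 2⁻¹ : ℝ) • cfc f ((4:ℝ)⁻¹ • ((3:ℝ) • A + B))
        + (2⁻¹ : ℝ) • cfc f ((4:ℝ)⁻¹ • (A + (3:ℝ) • B))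
        = (2:ℝ)⁻¹ • (cfc f ((4:ℝ)⁻¹ • ((3:ℝ) • A + B)) + cfc f ((4:ℝ)⁻¹ • (A + (3:ℝ) • B))) := by
      module
    rw [e1, e2] at h1
    exact h1
  · -- second inequality
    have l1 : cfc f ((4:ℝ)⁻¹ • ((3:ℝ) • A + B))
        ≤ ∫ s in (0:ℝ)..1, cfc f ((1 - s) • A + s • ((2:ℝ)⁻¹ • (A + B))) := by
      have e : (2:ℝ)⁻¹ • (A + (2:ℝ)⁻¹ • (A + B)) = (4:ℝ)⁻¹ • ((3:ℝ) • A + B) := by module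
      rw [← e]
      exact hlow1
    have l2 : cfc f ((4:ℝ)⁻¹ • (A + (3:ℝ) • B))
        ≤ ∫ s in (0:ℝ)..1, cfc f ((1 - s) • ((2:ℝ)⁻¹ • (A + B)) + s • B) := by
      have e : (2:ℝ)⁻¹ • ((2:ℝ)⁻¹ • (A + B) + B) = (4:ℝ)⁻¹ • (A + (3:ℝ) • B) := by module
      rw [← e]
      exact hlow2
    have hcomb := opSmul_le_opSmul (by norm_num : (0:ℝ) ≤ 2⁻¹) (add_le_add l1 l2)
    refine hcomb.trans (le_of_eq ?_)
    rw [i1, i2, op_halftwo, hsplit]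
  · -- third inequality
    have u1 : (∫ s in (0:ℝ)..1, cfc f ((1 - s) • A + s • ((2:ℝ)⁻¹ • (A + B))))
        ≤ (2:ℝ)⁻¹ • (cfc f A + cfc f ((2:ℝ)⁻¹ • (A + B))) := hup1
    have u2 : (∫ s in (0:ℝ)..1, cfc f ((1 - s) • ((2:ℝ)⁻¹ • (A + B)) + s • B))
        ≤ (2:ℝ)⁻¹ • (cfc f ((2:ℝ)⁻¹ • (A + B)) + cfc f B) := hup2
    have hcomb := add_le_add (opSmul_le_opSmul (by norm_num : (0:ℝ) ≤ 2⁻¹) u1)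
      (opSmul_le_opSmul (by norm_num : (0:ℝ) ≤ 2⁻¹) u2)
    have heq : (∫ t in (0:ℝ)..1, cfc f ((1 - t) • A + t • B))
        = (2:ℝ)⁻¹ • (∫ s in (0:ℝ)..1, cfc f ((1 - s) • A + s • ((2:ℝ)⁻¹ • (A + B))))
          + (2:ℝ)⁻¹ • ∫ s in (0:ℝ)..1, cfc f ((1 - s) • ((2:ℝ)⁻¹ • (A + B)) + s • B) := by
      rw [i1, i2, htwo, htwo, hsplit]
    rw [heq]
    refine hcomb.trans (le_of_eq ?_)
    module
  · -- fourth inequality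
    have h1 := hconvex A B hA hB hAI hBI 2⁻¹ ⟨by norm_num, by norm_num⟩
    have e1 : (1 - 2⁻¹ : ℝ) • A + (2⁻¹ : ℝ) • B = (2:ℝ)⁻¹ • (A + B) := by module
    have e2 : (1 - 2⁻¹ : ℝ) • cfc f A + (2⁻¹ : ℝ) • cfc f B
        = (2:ℝ)⁻¹ • (cfc f A + cfc f B) := by module
    rw [e1, e2] at h1
    exact (opSmul_le_opSmul (by norm_num : (0:ℝ) ≤ 2⁻¹)
      (add_le_add h1 (le_refl ((2:ℝ)⁻¹ • (cfc f A + cfc f B))))).trans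
      (le_of_eq (op_half _))
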